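/- Let K ⊂ ℝ^N be a compact set, let J ∈ L¹(ℝ^N) be a non-negative kernel, let k > 0, and let w : ℝ^N \ K → ℝ be continuous and bounded. Suppose that for every x ∈ ℝ^N \ K one has ∫_{ℝ^N \ K} J(x−y)(w(y)−w(x)) dy ≥ k·w(x), and that limsup_{|x|→∞} w(x) ≤ 0. Then w(x) ≤ 0 for every x ∈ ℝ^N \ K. -/

import Mathlib

open MeasureTheory Filter Set Metric

/-- Nonlocal comparison (maximum) principle: if `L w - k w ≥ 0` on `ℝ^N \ K`
and `limsup_{|x|→∞} w ≤ 0`, then `w ≤ 0` on `ℝ^N \ K`. -/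
theorem nonlocal_comparison_principle
    {N : ℕ} (hN : 1 ≤ N)
    (K : Set (EuclideanSpace ℝ (Fin N))) (hK : IsCompact K)
    (J : EuclideanSpace ℝ (Fin N) → ℝ) (hJint : Integrable J) (hJ0 : ∀ z, 0 ≤ J z)
    (k : ℝ) (hk : 0 < k)
    (w : EuclideanSpace ℝ (Fin N) → ℝ)
    (hwc : ContinuousOn w Kᶜ)
    (M : ℝ) (hwb : ∀ x ∈ Kᶜ, |w x| ≤ M)
    (hineq : ∀ x ∈ Kᶜ, k * w x ≤ ∫ y in Kᶜ, J (x - y) * (w y - w x))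
    (hlimsup : ∀ δ > 0, ∃ R : ℝ, ∀ x ∈ Kᶜ, R ≤ ‖x‖ → w x ≤ δ) :
    ∀ x ∈ Kᶜ, w x ≤ 0 := by
  intro x hx
  set C := ∫ z, J z with hC
  have hC0 : 0 ≤ C := integral_nonneg hJ0
  have hKm : MeasurableSet (Kᶜ : Set (EuclideanSpace ℝ (Fin N))) :=
    hK.isClosed.measurableSet.compl
  have hne : (w '' Kᶜ).Nonempty := ⟨w x, mem_image_of_mem _ hx⟩
  have hbdd : BddAbove (w '' Kᶜ) := by
    refine ⟨M, ?_⟩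
    rintro _ ⟨y, hy, rfl⟩
    exact (abs_le.1 (hwb y hy)).2
  set s := sSup (w '' Kᶜ) with hs
  have hws : ∀ y ∈ Kᶜ, w y ≤ s := fun y hy => le_csSup hbdd (mem_image_of_mem _ hy)
  have key : ∀ z ∈ Kᶜ, k * w z ≤ C * (s - w z) := by
    intro z hz
    have hsz : 0 ≤ s - w z := sub_nonneg.2 (hws z hz)
    have hJz : Integrable (fun y => J (z - y)) := hJint.comp_sub_left z
    have hgint : Integrable (fun y => J (z - y) * (s - w z)) (volume.restrict Kᶜ) :=
      (hJz.mul_const _).restrict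
    have hle : (∫ y in Kᶜ, J (z - y) * (w y - w z)) ≤ ∫ y in Kᶜ, J (z - y) * (s - w z) := by
      by_cases hf : Integrable (fun y => J (z - y) * (w y - w z)) (volume.restrict Kᶜ)
      · refine integral_mono_ae hf hgint ?_
        filter_upwards [ae_restrict_mem hKm] with y hy
        exact mul_le_mul_of_nonneg_left (by linarith [hws y hy]) (hJ0 _)
      · rw [integral_undef hf]
        exact integral_nonneg fun y => mul_nonneg (hJ0 _) hsz
    have h2 : (∫ y in Kᶜ, J (z - y) * (s - w z)) ≤ C * (s - w z) := by
      rw [integral_mul_const]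
      have hJle : (∫ y in Kᶜ, J (z - y)) ≤ C := by
        have h5 : (∫ y in Kᶜ, J (z - y)) ≤ ∫ y, J (z - y) :=
          setIntegral_le_integral hJz (Eventually.of_forall fun y => hJ0 _)
        have h6 : (∫ y, J (z - y)) = C := integral_sub_left_eq_self J volume z
        linarith
      exact mul_le_mul_of_nonneg_right hJle hsz
    exact (hineq z hz).trans (hle.trans h2)
  have hs0 : s ≤ 0 := by
    by_contra hsneg
    push_neg at hsneg
    have hks : k * s ≤ 0 := by
      by_contra h
      push_neg at h
      have hkC : 0 < k + C := by linarith
      have hε : (0:ℝ) < k * s / (2 * (k + C)) := by positivity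
      obtain ⟨_, ⟨z, hz, rfl⟩, hzs⟩ :=
        exists_lt_of_lt_csSup hne (show s - k * s / (2 * (k + C)) < s by linarith)
      have hkey := key z hz
      have h1 : s - k * s / (2 * (k + C)) < w z := hzs
      have h2 : s - w z < k * s / (2 * (k + C)) := by linarith
      have h3 : k * (s - k * s / (2 * (k + C))) ≤ k * w z :=
        mul_le_mul_of_nonneg_left h1.le hk.le
      have h4 : C * (s - w z) ≤ C * (k * s / (2 * (k + C))) :=
        mul_le_mul_of_nonneg_left h2.le hC0
      have hfield : k * (s - k * s / (2 * (k + C))) ≤ C * (k * s / (2 * (k + C))) := by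
        linarith
      have : k * s ≤ (k + C) * (k * s / (2 * (k + C))) := by nlinarith
      have heq : (k + C) * (k * s) / (2 * (k + C)) = k * s / 2 := by
        field_simp
      rw [mul_div_assoc', heq] at this
      linarith
    nlinarith
  exact (hws x hx).trans hs0
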